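/- Let u_1, u_2, ... be i.i.d. random vectors in R^d, let S ⊆ R^d be a linear subspace of dimension r ≥ 1, and let n ≥ 1 be an integer. Suppose that for every v ∈ S, the probability that v lies in Span(u_1, ..., u_n) is at least 1/2. Let k = ⌈log₂(r/δ)⌉ and m = k·n for δ ∈ (0,1). Then the probability that S ⊆ Span(u_1, ..., u_m) is at least 1 − δ. -/

import Mathlib

open MeasureTheory

section Aux

variable {d : ℕ}

private lemma measSpan (N : ℕ) (v : EuclideanSpace ℝ (Fin d)) :
    MeasurableSet {u : Fin N → EuclideanSpace ℝ (Fin d) |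
      v ∈ Submodule.span ℝ (Set.range u)} := by
  have hset : {u : Fin N → EuclideanSpace ℝ (Fin d) | v ∈ Submodule.span ℝ (Set.range u)}
      = (fun u : Fin N → EuclideanSpace ℝ (Fin d) =>
          ⨅ c : Fin N → ℚ, ‖v - ∑ i, (c i : ℝ) • u i‖) ⁻¹' {0} := by
    ext u
    simp only [Set.mem_setOf_eq, Set.mem_preimage, Set.mem_singleton_iff]
    constructor
    · intro hv
      obtain ⟨c, hc⟩ := (Submodule.mem_span_range_iff_exists_fun ℝ).1 hv
      have hbdd : BddBelow (Set.range fun c : Fin N → ℚ =>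
          ‖v - ∑ i, (c i : ℝ) • u i‖) := ⟨0, by rintro x ⟨c', rfl⟩; exact norm_nonneg _⟩
      refine le_antisymm ?_ (le_ciInf fun _ => norm_nonneg _)
      refine le_of_forall_pos_le_add fun ε hε => ?_
      have hM : (0:ℝ) < 1 + ∑ i, ‖u i‖ := by positivity
      set M := 1 + ∑ i, ‖u i‖ with hMdef
      have hεM : 0 < ε / M := div_pos hε hM
      choose q hq using fun i : Fin N => exists_rat_near (c i) hεM
      have hval : ‖v - ∑ i, ((q i : ℝ)) • u i‖ ≤ ε / M * ∑ i, ‖u i‖ := by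
        rw [← hc, ← Finset.sum_sub_distrib]
        refine le_trans (norm_sum_le _ _) ?_
        rw [Finset.mul_sum]
        refine Finset.sum_le_sum fun i _ => ?_
        rw [← sub_smul, norm_smul, Real.norm_eq_abs]
        exact mul_le_mul_of_nonneg_right (le_of_lt (hq i)) (norm_nonneg _)
      have hlt : ε / M * ∑ i, ‖u i‖ ≤ ε := by
        rw [div_mul_eq_mul_div, div_le_iff₀ hM]
        have : ∑ i, ‖u i‖ ≤ M := by
          rw [hMdef]; linarith
        nlinarith [le_of_lt hε]
      calc (⨅ c : Fin N → ℚ, ‖v - ∑ i, (c i : ℝ) • u i‖)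
          ≤ ‖v - ∑ i, ((q i : ℝ)) • u i‖ := ciInf_le hbdd q
        _ ≤ ε := le_trans hval hlt
        _ ≤ 0 + ε := by linarith
    · intro h0
      have hclosed : IsClosed ((Submodule.span ℝ (Set.range u) :
          Submodule ℝ (EuclideanSpace ℝ (Fin d))) : Set (EuclideanSpace ℝ (Fin d))) :=
        Submodule.closed_of_finiteDimensional _
      have : v ∈ closure ((Submodule.span ℝ (Set.range u) :
          Submodule ℝ (EuclideanSpace ℝ (Fin d))) : Set (EuclideanSpace ℝ (Fin d))) := by
        rw [Metric.mem_closure_iff]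
        intro ε hε
        have : (⨅ c : Fin N → ℚ, ‖v - ∑ i, (c i : ℝ) • u i‖) < ε := by rw [h0]; exact hε
        obtain ⟨c, hc⟩ := exists_lt_of_ciInf_lt this
        refine ⟨∑ i, (c i : ℝ) • u i, ?_, ?_⟩
        · exact Submodule.sum_mem _ fun i _ => Submodule.smul_mem _ _
            (Submodule.subset_span (Set.mem_range_self i))
        · rwa [dist_eq_norm]
      rwa [hclosed.closure_eq] at this
  rw [hset]
  refine Measurable.iInf (fun c => ?_) (measurableSet_singleton 0)
  exact (measurable_const.sub (Finset.measurable_sum (f := fun i (u : Fin N → EuclideanSpace ℝ (Fin d)) => (c i : ℝ) • u i) _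
    fun i _ => (by fun_prop))).norm

private lemma piProdBound (P : Measure (EuclideanSpace ℝ (Fin d))) [IsProbabilityMeasure P]
    (v : EuclideanSpace ℝ (Fin d)) (a b : ℕ) :
    (Measure.pi fun _ : Fin (a + b) => P) {u | v ∉ Submodule.span ℝ (Set.range u)} ≤
      (Measure.pi fun _ : Fin a => P) {u | v ∉ Submodule.span ℝ (Set.range u)} *
      (Measure.pi fun _ : Fin b => P) {u | v ∉ Submodule.span ℝ (Set.range u)} := by
  let E := EuclideanSpace ℝ (Fin d)
  let e : Fin a ⊕ Fin b ≃ Fin (a + b) := finSumFinEquiv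
  have h1 := measurePreserving_sumPiEquivProdPi_symm
    (fun _ : Fin a ⊕ Fin b => P)
  have h2 := measurePreserving_piCongrLeft (fun _ : Fin (a + b) => P) e
  have h := h2.comp h1
  have hmeas : MeasurableSet {u : Fin (a + b) → E | v ∉ Submodule.span ℝ (Set.range u)} :=
    (measSpan (a + b) v).compl
  rw [← h.map_eq, Measure.map_apply h.measurable hmeas]
  have hsub : (MeasurableEquiv.piCongrLeft (fun _ : Fin (a + b) => E) e ∘
        (MeasurableEquiv.sumPiEquivProdPi (fun _ : Fin a ⊕ Fin b => E)).symm) ⁻¹'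
        {u : Fin (a + b) → E | v ∉ Submodule.span ℝ (Set.range u)} ⊆
      {u : Fin a → E | v ∉ Submodule.span ℝ (Set.range u)} ×ˢ
      {u : Fin b → E | v ∉ Submodule.span ℝ (Set.range u)} := by
    rintro ⟨x, y⟩ hp
    simp only [Set.mem_preimage, Function.comp_apply, Set.mem_setOf_eq] at hp
    have hkey : ∀ i : Fin a ⊕ Fin b,
        (MeasurableEquiv.piCongrLeft (fun _ : Fin (a + b) => E) e)
          ((MeasurableEquiv.sumPiEquivProdPi (fun _ : Fin a ⊕ Fin b => E)).symm (x, y)) (e i)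
        = Sum.elim x y i := by
      intro i
      rw [MeasurableEquiv.piCongrLeft_apply_apply]
      cases i <;> rfl
    constructor
    · intro hx
      exact hp (Submodule.span_mono (by
        rintro w ⟨i, rfl⟩
        exact ⟨e (Sum.inl i), hkey (Sum.inl i)⟩) hx)
    · intro hy
      exact hp (Submodule.span_mono (by
        rintro w ⟨i, rfl⟩
        exact ⟨e (Sum.inr i), hkey (Sum.inr i)⟩) hy)
  refine le_trans (measure_mono hsub) ?_
  rw [Measure.prod_prod]

private lemma powBound (n : ℕ) (P : Measure (EuclideanSpace ℝ (Fin d)))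
    [IsProbabilityMeasure P] (v : EuclideanSpace ℝ (Fin d))
    (hfail : (Measure.pi fun _ : Fin n => P)
      {u | v ∉ Submodule.span ℝ (Set.range u)} ≤ 1 / 2) (k : ℕ) :
    (Measure.pi fun _ : Fin (k * n) => P)
      {u | v ∉ Submodule.span ℝ (Set.range u)} ≤ (1 / 2 : ENNReal) ^ k := by
  induction k with
  | zero => simpa using prob_le_one
  | succ k ih =>
    rw [Nat.succ_mul, pow_succ]
    exact le_trans (piProdBound P v (k * n) n) (mul_le_mul' ih hfail)

end Aux

/-- Let `u_1, u_2, ...` be i.i.d. random vectors in `ℝ^d`, `S` a linear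
subspace of dimension `r ≥ 1`, and `n ≥ 1`. If for every `v ∈ S` the probability that
`v` lies in the span of `n` i.i.d. samples is at least `1/2`, then with
`k = ⌈log₂ (r/δ)⌉` and `m = k * n`, the probability that `S` is contained in the span
of `m` i.i.d. samples is at least `1 - δ`. -/
theorem stmt2 (d n r : ℕ) (hr : 1 ≤ r) (hn : 1 ≤ n) (δ : ℝ) (hδ : δ ∈ Set.Ioo (0 : ℝ) 1)
    (P : Measure (EuclideanSpace ℝ (Fin d))) [IsProbabilityMeasure P]
    (S : Submodule ℝ (EuclideanSpace ℝ (Fin d))) (hS : Module.finrank ℝ S = r)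
    (hyp : ∀ v ∈ S, (1 : ENNReal) / 2 ≤
      (Measure.pi fun _ : Fin n => P) {u | v ∈ Submodule.span ℝ (Set.range u)}) :
    1 - ENNReal.ofReal δ ≤
      (Measure.pi fun _ : Fin (⌈Real.logb 2 (r / δ)⌉₊ * n) => P)
        {u | (S : Set (EuclideanSpace ℝ (Fin d))) ⊆
          (Submodule.span ℝ (Set.range u) : Submodule ℝ (EuclideanSpace ℝ (Fin d)))} := by
  obtain ⟨hδ0, hδ1⟩ := hδ
  set E := EuclideanSpace ℝ (Fin d)
  set k := ⌈Real.logb 2 (r / δ)⌉₊ with hk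
  set m := k * n with hm
  set μ := Measure.pi fun _ : Fin m => P with hμ
  -- a basis of S
  let b : Module.Basis (Fin r) ℝ S := Module.finBasisOfFinrankEq ℝ S hS
  let v : Fin r → E := fun i => (b i : E)
  have hvS : ∀ i, v i ∈ S := fun i => (b i).2
  have hspan : Submodule.span ℝ (Set.range v) = S := by
    have h1 : Submodule.span ℝ (Set.range v)
        = (Submodule.span ℝ (Set.range ⇑b)).map S.subtype := by
      rw [Submodule.map_span]
      congr 1
      rw [← Set.range_comp]
      rfl
    rw [h1, b.span_eq, Submodule.map_top, Submodule.range_subtype]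
  -- failure probability for each basis vector
  have hfail : ∀ i, (Measure.pi fun _ : Fin n => P)
      {u | v i ∉ Submodule.span ℝ (Set.range u)} ≤ 1 / 2 := by
    intro i
    have h := hyp (v i) (hvS i)
    have : {u : Fin n → E | v i ∉ Submodule.span ℝ (Set.range u)}
        = {u : Fin n → E | v i ∈ Submodule.span ℝ (Set.range u)}ᶜ := rfl
    rw [this, prob_compl_eq_one_sub (measSpan n (v i))]
    rw [tsub_le_iff_right]
    calc (1 : ENNReal) = 1 / 2 + 1 / 2 := (ENNReal.add_halves 1).symm
      _ ≤ 1 / 2 + (Measure.pi fun _ : Fin n => P)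
          {u | v i ∈ Submodule.span ℝ (Set.range u)} := add_le_add_right h _
  have hkey : ∀ i, μ {u | v i ∉ Submodule.span ℝ (Set.range u)} ≤ (1 / 2 : ENNReal) ^ k :=
    fun i => powBound n P (v i) (hfail i) k
  -- the numeric bound
  have hnum : (r : ENNReal) * (1 / 2 : ENNReal) ^ k ≤ ENNReal.ofReal δ := by
    have hr1 : (1 : ℝ) ≤ r := by exact_mod_cast hr
    have hrδ : (1 : ℝ) ≤ r / δ := by
      rw [le_div_iff₀ hδ0]; linarith
    have hlogk : Real.logb 2 ((r : ℝ) / δ) ≤ (k : ℝ) := Nat.le_ceil _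
    have h2k : (r : ℝ) / δ ≤ (2 : ℝ) ^ (k : ℕ) := by
      calc (r : ℝ) / δ = (2 : ℝ) ^ (Real.logb 2 ((r : ℝ) / δ)) :=
            (Real.rpow_logb (by norm_num) (by norm_num) (by positivity)).symm
        _ ≤ (2 : ℝ) ^ ((k : ℕ) : ℝ) :=
            Real.rpow_le_rpow_of_exponent_le (by norm_num) hlogk
        _ = (2 : ℝ) ^ (k : ℕ) := Real.rpow_natCast 2 k
    have hreal : (r : ℝ) * (1 / 2) ^ k ≤ δ := by
      have h2pos : (0 : ℝ) < (2 : ℝ) ^ k := by positivity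
      rw [div_le_iff₀ hδ0] at h2k
      rw [one_div, inv_pow, ← div_eq_mul_inv, div_le_iff₀ h2pos]
      linarith
    calc (r : ENNReal) * (1 / 2 : ENNReal) ^ k
        = ENNReal.ofReal ((r : ℝ) * (1 / 2) ^ k) := by
          rw [ENNReal.ofReal_mul (by positivity), ENNReal.ofReal_pow (by norm_num)]
          congr 1
          · exact (ENNReal.ofReal_natCast r).symm
          · congr 1
            rw [ENNReal.ofReal_div_of_pos (by norm_num)]
            norm_num
      _ ≤ ENNReal.ofReal δ := ENNReal.ofReal_le_ofReal hreal
  -- union bound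
  set G := {u : Fin m → E | (S : Set E) ⊆
    (Submodule.span ℝ (Set.range u) : Submodule ℝ E)} with hG
  have hsub : Gᶜ ⊆ ⋃ i, {u : Fin m → E | v i ∉ Submodule.span ℝ (Set.range u)} := by
    intro u hu
    by_contra hc
    simp only [Set.mem_iUnion, Set.mem_setOf_eq, not_exists, not_not] at hc
    apply hu
    have : S ≤ Submodule.span ℝ (Set.range u) := by
      rw [← hspan]
      rw [Submodule.span_le]
      rintro w ⟨i, rfl⟩
      exact hc i
    exact fun x hx => this hx
  have hGc : μ Gᶜ ≤ ENNReal.ofReal δ := by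
    calc μ Gᶜ ≤ ∑' i : Fin r, μ {u : Fin m → E | v i ∉ Submodule.span ℝ (Set.range u)} :=
          le_trans (measure_mono hsub) (measure_iUnion_le _)
      _ ≤ ∑' _i : Fin r, (1 / 2 : ENNReal) ^ k := ENNReal.tsum_le_tsum hkey
      _ = (r : ENNReal) * (1 / 2 : ENNReal) ^ k := by
          rw [tsum_fintype]
          simp [Finset.sum_const, nsmul_eq_mul]
      _ ≤ ENNReal.ofReal δ := hnum
  have hunion : (1 : ENNReal) ≤ μ G + μ Gᶜ := by
    have : μ (G ∪ Gᶜ) = 1 := by rw [Set.union_compl_self]; exact measure_univ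
    calc (1 : ENNReal) = μ (G ∪ Gᶜ) := this.symm
      _ ≤ μ G + μ Gᶜ := measure_union_le _ _
  rw [tsub_le_iff_right]
  calc (1 : ENNReal) ≤ μ G + μ Gᶜ := hunion
    _ ≤ μ G + ENNReal.ofReal δ := add_le_add_right hGc _
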